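/- arXiv:0903.3729 — 3 statements merged into one kernel-verified Lean document; each statement's English description precedes it below -/
import Mathlib

section
/- Let h : V → V be a surjective map of a set V with finite fibers in the following sense: V is a Noetherian topological space, h is continuous, closed, surjective, and the image of any irreducible closed subset is irreducible closed of the same dimension behavior; suppose B ⊆ V is a closed subset with h⁻¹(B) ⊆ B. Then h⁻¹(B) = B, and the map Γ ↦ closure of h(Γ) induces a bijection on the set of irreducible components of B. -/
open Set

/-- The irreducible components of a closed subset `B`: maximal subsets of `B`
that are irreducible and closed. -/
def irrComps {V : Type*} [TopologicalSpace V] (B : Set V) : Set (Set V) :=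
  {Γ | Maximal (fun s => s ⊆ B ∧ IsIrreducible s ∧ IsClosed s) Γ}

/-- Decomposition of a closed set in a Noetherian space into finitely many
irreducible closed sets. -/
lemma noeth_decomp {V : Type*} [TopologicalSpace V] [TopologicalSpace.NoetherianSpace V]
    {C : Set V} (hC : IsClosed C) :
    ∃ T : Finset (Set V), (∀ z ∈ T, IsIrreducible z ∧ IsClosed z) ∧ C = ⋃₀ ↑T := by
  classical
  obtain ⟨S, hSirr, hSsup⟩ :=
    TopologicalSpace.NoetherianSpace.exists_finset_irreducible (⟨C, hC⟩ : TopologicalSpace.Closeds V)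
  refine ⟨S.image (fun t : TopologicalSpace.Closeds V => (t : Set V)), ?_, ?_⟩
  · intro z hz
    obtain ⟨t, ht, rfl⟩ := Finset.mem_image.1 hz
    exact ⟨hSirr ⟨t, ht⟩, t.2⟩
  · have hC' : C = ((S.sup id : TopologicalSpace.Closeds V) : Set V) :=
      congrArg (fun c : TopologicalSpace.Closeds V => (c : Set V)) hSsup
    rw [hC', TopologicalSpace.Closeds.coe_finset_sup]
    ext x
    simp [Finset.sup_set_eq_biUnion]

/-- Every irreducible closed subset of a closed set `C` is contained in an
irreducible component of `C`. -/
lemma exists_irrComp {V : Type*} [TopologicalSpace V] [TopologicalSpace.NoetherianSpace V]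
    {C : Set V} (hC : IsClosed C) :
    (∀ s : Set V, s ⊆ C → IsIrreducible s → IsClosed s → ∃ Γ ∈ irrComps C, s ⊆ Γ) ∧
      (irrComps C).Finite := by
  obtain ⟨T, hT, hTC⟩ := noeth_decomp hC
  -- every irreducible closed subset of C is contained in a member of T
  have key : ∀ s : Set V, s ⊆ C → IsIrreducible s → ∃ z ∈ T, s ⊆ z := by
    intro s hsC hsirr
    exact isIrreducible_iff_sUnion_isClosed.1 hsirr T (fun z hz => (hT z hz).2)
      (hTC ▸ hsC)
  have hTsubC : ∀ z ∈ T, z ⊆ C := by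
    intro z hz x hx
    rw [hTC]; exact ⟨z, hz, hx⟩
  constructor
  · intro s hsC hsirr hscl
    obtain ⟨z, hzT, hsz⟩ := key s hsC hsirr
    -- pick a maximal element of T containing z
    have hfin : ({t ∈ (T : Set (Set V)) | z ⊆ t}).Finite := T.finite_toSet.subset (sep_subset _ _)
    obtain ⟨z', hz', hmax⟩ := Set.Finite.exists_maximalFor id _ hfin ⟨z, hzT, Subset.rfl⟩
    obtain ⟨hz'T, hzz'⟩ := hz'
    refine ⟨z', ⟨⟨hTsubC z' hz'T, (hT z' hz'T).1, (hT z' hz'T).2⟩, ?_⟩, hsz.trans hzz'⟩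
    · rintro t ⟨htC, htirr, htcl⟩ hz't
      obtain ⟨w, hwT, htw⟩ := key t htC htirr
      have hw : w ∈ {t ∈ (T : Set (Set V)) | z ⊆ t} :=
        ⟨hwT, hzz'.trans (hz't.trans htw)⟩
      have hzw : z' = w := le_antisymm (hz't.trans htw) (hmax hw (hz't.trans htw))
      rw [hzw]; exact htw
  · apply (T.finite_toSet).subset
    rintro Γ ⟨⟨hΓC, hΓirr, hΓcl⟩, hΓmax⟩
    obtain ⟨z, hzT, hΓz⟩ := key Γ hΓC hΓirr
    have : z ⊆ Γ := hΓmax ⟨hTsubC z hzT, (hT z hzT).1, (hT z hzT).2⟩ hΓz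
    have : Γ = z := le_antisymm hΓz this
    rwa [this]

/-- Let `V` be a Noetherian topological space and `h : V → V` a continuous
closed surjection such that for every irreducible closed `Γ ⊆ V`, the image `h '' Γ` is
irreducible, closed, of the same Krull dimension, and every irreducible component of
`h ⁻¹' Γ` dominating `Γ` has dimension `dim Γ`.  If `B ⊆ V` is closed with `h ⁻¹' B ⊆ B`,
then `h ⁻¹' B = B` and `Γ ↦ closure (h '' Γ)` induces a bijection of the set of
irreducible components of `B` onto itself. -/
theorem stmt1 {V : Type*} [TopologicalSpace V] [TopologicalSpace.NoetherianSpace V]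
    (h : V → V) (hcont : Continuous h) (hclosed : IsClosedMap h)
    (hsurj : Function.Surjective h)
    (himg : ∀ Γ : Set V, IsIrreducible Γ → IsClosed Γ →
      IsIrreducible (h '' Γ) ∧ IsClosed (h '' Γ) ∧
        topologicalKrullDim ↥(h '' Γ) = topologicalKrullDim ↥Γ)
    (hdom : ∀ Γ : Set V, IsIrreducible Γ → IsClosed Γ →
      ∀ Δ ∈ irrComps (h ⁻¹' Γ), h '' Δ = Γ →
        topologicalKrullDim ↥Δ = topologicalKrullDim ↥Γ)
    (B : Set V) (hB : IsClosed B) (hpre : h ⁻¹' B ⊆ B) :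
    h ⁻¹' B = B ∧
      Set.BijOn (fun Γ : Set V => closure (h '' Γ)) (irrComps B) (irrComps B) := by
  -- Step 1: h ⁻¹' B = B by Noetherian stabilization of the chain of iterated preimages.
  have hfix : h ⁻¹' B = B := by
    set C : ℕ → TopologicalSpace.Closeds V :=
      fun n => ⟨(h^[n]) ⁻¹' B, hB.preimage (hcont.iterate n)⟩ with hCdef
    obtain ⟨c, ⟨n, rfl⟩, hmin⟩ :=
      (wellFounded_lt (α := TopologicalSpace.Closeds V)).has_min {c | ∃ n, c = C n} ⟨C 0, 0, rfl⟩
    have hsucc : C (n + 1) ≤ C n := by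
      intro x hx
      have hx' : h (h^[n] x) ∈ B := by
        have : h^[n + 1] x ∈ B := hx
        rwa [Function.iterate_succ', Function.comp_apply] at this
      exact hpre hx'
    have heq : C (n + 1) = C n := by
      rcases eq_or_lt_of_le hsucc with heq | hlt
      · exact heq
      · exact absurd hlt (hmin _ ⟨n + 1, rfl⟩)
    have hsets : (h^[n + 1]) ⁻¹' B = (h^[n]) ⁻¹' B :=
      congrArg (fun c : TopologicalSpace.Closeds V => (c : Set V)) heq
    have hsets' : (h^[n]) ⁻¹' (h ⁻¹' B) = (h^[n]) ⁻¹' B := by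
      rw [← Set.preimage_comp, ← Function.iterate_succ']
      exact hsets
    exact (hsurj.iterate n).preimage_injective hsets'
  have himgB : h '' B = B := by
    conv_lhs => rw [← hfix]
    exact Set.image_preimage_eq _ hsurj
  refine ⟨hfix, ?_⟩
  classical
  obtain ⟨hcompex, hcompfin⟩ := exists_irrComp hB
  -- Step 2: every component of B is the image of a component of B.
  have step : ∀ Γ' ∈ irrComps B, ∃ Γ ∈ irrComps B, h '' Γ = Γ' := by
    rintro Γ' ⟨⟨hΓ'B, hΓ'irr, hΓ'cl⟩, hΓ'max⟩
    set P : Set V := h ⁻¹' Γ' with hPdef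
    have hPcl : IsClosed P := hΓ'cl.preimage hcont
    have hPB : P ⊆ B := fun x hx => hfix ▸ (Set.preimage_mono hΓ'B hx : x ∈ h ⁻¹' B)
    have hPimg : h '' P = Γ' := Set.image_preimage_eq _ hsurj
    obtain ⟨T, hT, hTP⟩ := noeth_decomp hPcl
    -- Γ' is covered by the finitely many closed sets h '' z, z ∈ T
    have hcover : Γ' ⊆ ⋃₀ ↑(T.image (fun z => h '' z)) := by
      rw [← hPimg, hTP]
      rintro y ⟨x, hx, rfl⟩
      obtain ⟨z, hzT, hxz⟩ := hx
      refine ⟨h '' z, ?_, ⟨x, hxz, rfl⟩⟩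
      simp only [Finset.coe_image, Set.mem_image, Finset.mem_coe]
      exact ⟨z, hzT, rfl⟩
    obtain ⟨w, hwT, hΓ'w⟩ := isIrreducible_iff_sUnion_isClosed.1 hΓ'irr _
      (by
        intro z hz
        simp only [Finset.mem_image] at hz
        obtain ⟨t, ht, rfl⟩ := hz
        exact (himg t (hT t ht).1 (hT t ht).2).2.1) hcover
    simp only [Finset.mem_image] at hwT
    obtain ⟨z, hzT, rfl⟩ := hwT
    have hzP : z ⊆ P := by
      intro x hx; rw [hTP]; exact ⟨z, hzT, hx⟩
    have hzimg : h '' z = Γ' := by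
      refine le_antisymm ?_ hΓ'w
      rw [← hPimg]; exact Set.image_mono hzP
    -- extend z to a component Γ of B
    obtain ⟨Γ, hΓcomp, hzΓ⟩ := hcompex z (hzP.trans hPB) (hT z hzT).1 (hT z hzT).2
    obtain ⟨⟨hΓB, hΓirr, hΓcl⟩, hΓmax⟩ := hΓcomp
    refine ⟨Γ, ⟨⟨hΓB, hΓirr, hΓcl⟩, hΓmax⟩, ?_⟩
    have hsub : Γ' ⊆ h '' Γ := hzimg ▸ Set.image_mono hzΓ
    have hin : h '' Γ ⊆ B := himgB ▸ Set.image_mono hΓB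
    have := hΓ'max ⟨hin, (himg Γ hΓirr hΓcl).1, (himg Γ hΓirr hΓcl).2.1⟩ hsub
    exact le_antisymm this hsub
  -- the map f Γ = closure (h '' Γ) agrees with h '' Γ on components
  have hfeq : ∀ Γ ∈ irrComps B, closure (h '' Γ) = h '' Γ := by
    rintro Γ ⟨⟨hΓB, hΓirr, hΓcl⟩, -⟩
    exact (himg Γ hΓirr hΓcl).2.1.closure_eq
  -- Step 3: the counting argument via an injective right inverse g.
  classical
  set g : Set V → Set V := fun Γ' =>
    if hΓ' : Γ' ∈ irrComps B then (step Γ' hΓ').choose else ∅ with hgdef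
  have hg : ∀ Γ' ∈ irrComps B, g Γ' ∈ irrComps B ∧ h '' (g Γ') = Γ' := by
    intro Γ' hΓ'
    have := (step Γ' hΓ').choose_spec
    simpa [hgdef, hΓ'] using this
  have hgmaps : Set.MapsTo g (irrComps B) (irrComps B) := fun Γ' hΓ' => (hg Γ' hΓ').1
  have hginj : Set.InjOn g (irrComps B) := by
    intro a ha b hb hab
    rw [← (hg a ha).2, ← (hg b hb).2, hab]
  have hgbij : Set.BijOn g (irrComps B) (irrComps B) :=
    (hcompfin.injOn_iff_bijOn_of_mapsTo hgmaps).1 hginj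
  -- conclude that f is a bijection on components
  have hfg : ∀ Γ' ∈ irrComps B, closure (h '' (g Γ')) = Γ' := by
    intro Γ' hΓ'
    rw [hfeq _ (hg Γ' hΓ').1, (hg Γ' hΓ').2]
  refine ⟨?_, ?_, ?_⟩
  · intro Γ hΓ
    obtain ⟨Γ', hΓ', rfl⟩ := hgbij.surjOn hΓ
    simpa [hfg Γ' hΓ'] using hΓ'
  · intro a ha b hb hab
    obtain ⟨a', ha', rfl⟩ := hgbij.surjOn ha
    obtain ⟨b', hb', rfl⟩ := hgbij.surjOn hb
    simp only [hfg a' ha', hfg b' hb'] at hab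
    exact hab ▸ rfl
  · intro Γ' hΓ'
    exact ⟨g Γ', (hg Γ' hΓ').1, hfg Γ' hΓ'⟩
end

section
/- Let V be a finite-dimensional real vector space, C ⊆ V a closed strictly convex cone with C + (−C) = V, and φ : V → V a linear endomorphism with φ(C) ⊆ C. Let ‖·‖ be any norm on V, χ : V → ℝ a linear form with χ > 0 on C \ {0}, and u a point in the topological interior of C. Then ρ(φ) = lim_{m→∞} ‖φ^m(u)‖^{1/m} = lim_{m→∞} χ(φ^m(u))^{1/m}, where ρ(φ) is the spectral radius of φ. -/
open TensorProduct Filter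

lemma aux_rpow_tendsto_one {A : ℝ} (hA : 0 < A) :
    Tendsto (fun m : ℕ => A ^ ((m:ℝ)⁻¹)) atTop (nhds 1) := by
  have h0 : Tendsto (fun m : ℕ => ((m:ℝ)⁻¹)) atTop (nhds 0) :=
    tendsto_inv_atTop_zero.comp tendsto_natCast_atTop_atTop
  have h1 : Tendsto (fun m : ℕ => Real.exp (Real.log A * (m:ℝ)⁻¹)) atTop (nhds 1) := by
    have := (Real.continuous_exp.tendsto 0).comp
      (by simpa using h0.const_mul (Real.log A))
    simpa [mul_zero, Function.comp_def] using this
  refine h1.congr fun m => ?_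
  rw [Real.rpow_def_of_pos hA]

lemma aux_root_squeeze {f g : ℕ → ℝ} (hg0 : ∀ m, 0 ≤ g m)
    {A B r : ℝ} (hA : 0 < A) (hB : 0 < B)
    (h1 : ∀ m, g m ≤ A * f m) (h2 : ∀ m, f m ≤ B * g m)
    (hr : Tendsto (fun m : ℕ => g m ^ ((m:ℝ)⁻¹)) atTop (nhds r)) :
    Tendsto (fun m : ℕ => f m ^ ((m:ℝ)⁻¹)) atTop (nhds r) := by
  have h1' : ∀ m, A⁻¹ * g m ≤ f m := fun m => by
    rw [inv_mul_le_iff₀ hA]; exact h1 m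
  have hA' : (0:ℝ) < A⁻¹ := inv_pos.mpr hA
  have hlo : Tendsto (fun m : ℕ => A⁻¹ ^ ((m:ℝ)⁻¹) * g m ^ ((m:ℝ)⁻¹)) atTop (nhds r) := by
    simpa using (aux_rpow_tendsto_one hA').mul hr
  have hhi : Tendsto (fun m : ℕ => B ^ ((m:ℝ)⁻¹) * g m ^ ((m:ℝ)⁻¹)) atTop (nhds r) := by
    simpa using (aux_rpow_tendsto_one hB).mul hr
  refine tendsto_of_tendsto_of_tendsto_of_le_of_le hlo hhi (fun m => ?_) (fun m => ?_)
  · rw [← Real.mul_rpow hA'.le (hg0 m)]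
    exact Real.rpow_le_rpow (mul_nonneg hA'.le (hg0 m)) (h1' m) (by positivity)
  · rw [← Real.mul_rpow hB.le (hg0 m)]
    exact Real.rpow_le_rpow ((mul_nonneg hA'.le (hg0 m)).trans (h1' m)) (h2 m) (by positivity)

lemma aux_gelfand {A : Type*} [NormedRing A] [NormedAlgebra ℂ A] [CompleteSpace A]
    [NormOneClass A] (a : A) :
    Tendsto (fun m : ℕ => ‖a ^ m‖ ^ ((m:ℝ)⁻¹)) atTop (nhds (spectralRadius ℂ a).toReal) := by
  have h := spectrum.pow_norm_pow_one_div_tendsto_nhds_spectralRadius a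
  have hne : spectralRadius ℂ a ≠ ⊤ :=
    (lt_of_le_of_lt (spectrum.spectralRadius_le_nnnorm a) ENNReal.coe_lt_top).ne
  have h2 := (ENNReal.tendsto_toReal hne).comp h
  refine h2.congr fun m => ?_
  simp only [Function.comp, ENNReal.toReal_ofReal (Real.rpow_nonneg (norm_nonneg _) _), one_div]

lemma aux_sSup_abs_spectrum {A : Type*} [NormedRing A] [NormedAlgebra ℂ A] [CompleteSpace A]
    [Nontrivial A] (a : A) :
    sSup ((fun μ => ‖μ‖) '' spectrum ℂ a) = (spectralRadius ℂ a).toReal := by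
  have hK : IsCompact (spectrum ℂ a) := spectrum.isCompact a
  have hne : (spectrum ℂ a).Nonempty := spectrum.nonempty a
  obtain ⟨μ0, hμ0, hmax'⟩ := hK.exists_isMaxOn hne continuous_norm.continuousOn
  have hmax : ∀ μ ∈ spectrum ℂ a, ‖μ‖ ≤ ‖μ0‖ := fun μ hμ => hmax' hμ
  have h1 : sSup ((fun μ => ‖μ‖) '' spectrum ℂ a) = ‖μ0‖ := by
    refine le_antisymm (csSup_le (hne.image _) ?_) (le_csSup ⟨‖μ0‖, ?_⟩ ⟨μ0, hμ0, rfl⟩)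
    · rintro r ⟨μ, hμ, rfl⟩; exact hmax μ hμ
    · rintro r ⟨μ, hμ, rfl⟩; exact hmax μ hμ
  have h2 : spectralRadius ℂ a = ENNReal.ofReal (‖μ0‖) := by
    refine le_antisymm (iSup₂_le fun k hk => ?_) ?_
    · rw [← enorm_eq_nnnorm, ← ofReal_norm]
      exact ENNReal.ofReal_le_ofReal (by simpa using hmax k hk)
    · have := le_iSup₂ (f := fun (k : ℂ) (_ : k ∈ spectrum ℂ a) => (‖k‖₊ : ENNReal)) μ0 hμ0
      rw [← enorm_eq_nnnorm, ← ofReal_norm] at this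
      exact this
  rw [h1, h2, ENNReal.toReal_ofReal (norm_nonneg μ0)]

set_option maxHeartbeats 1000000 in
lemma aux_complexify {V : Type*} [AddCommGroup V] [Module ℝ V] [FiniteDimensional ℝ V]
    (φ : Module.End ℝ V) :
    ∃ (n : ℕ) (j : V →ₗ[ℝ] (Fin n → ℂ)) (π : (Fin n → ℂ) →ₗ[ℝ] V)
      (a : (Fin n → ℂ) →L[ℂ] (Fin n → ℂ)),
      (∀ v, π (j v) = v) ∧
      (∀ (m : ℕ) (v : V), (a ^ m) (j v) = j ((φ ^ m) v)) ∧
      (Function.Surjective fun p : V × V => j p.1 + Complex.I • j p.2) ∧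
      (∀ μ : ℂ, Module.End.HasEigenvalue
          (LinearMap.baseChange ℂ φ : Module.End ℂ (ℂ ⊗[ℝ] V)) μ ↔ μ ∈ spectrum ℂ a) := by
  classical
  let F : Module.End ℂ (ℂ ⊗[ℝ] V) := LinearMap.baseChange ℂ φ
  let n : ℕ := Module.finrank ℂ (ℂ ⊗[ℝ] V)
  let e : (ℂ ⊗[ℝ] V) ≃ₗ[ℂ] (Fin n → ℂ) := (Module.finBasis ℂ (ℂ ⊗[ℝ] V)).equivFun
  let πt : (ℂ ⊗[ℝ] V) →ₗ[ℝ] V :=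
    (TensorProduct.lid ℝ V).toLinearMap ∘ₗ (LinearMap.rTensor V Complex.reLm)
  have hπt1 : ∀ v : V, πt ((1:ℂ) ⊗ₜ[ℝ] v) = v := by
    intro v
    show (TensorProduct.lid ℝ V) (LinearMap.rTensor V Complex.reLm ((1:ℂ) ⊗ₜ[ℝ] v)) = v
    rw [LinearMap.rTensor_tmul]
    simp [TensorProduct.lid_tmul, Complex.reLm_coe]
  let ψ : Module.End ℂ (Fin n → ℂ) := e.conj F
  have hψ1 : ∀ t : ℂ ⊗[ℝ] V, ψ (e t) = e (F t) := by
    intro t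
    show e.conj F (e t) = e (F t)
    rw [LinearEquiv.conj_apply_apply, e.symm_apply_apply]
  let a : (Fin n → ℂ) →L[ℂ] (Fin n → ℂ) := Module.End.toContinuousLinearMap (Fin n → ℂ) ψ
  have ha : ∀ (m : ℕ) (w : Fin n → ℂ), (a ^ m) w = (ψ ^ m) w := by
    intro m w
    show ((Module.End.toContinuousLinearMap (Fin n → ℂ)) ψ ^ m) w = (ψ ^ m) w
    rw [← map_pow]
    rfl
  have hψm : ∀ (m : ℕ) (t : ℂ ⊗[ℝ] V), (ψ ^ m) (e t) = e ((F ^ m) t) := by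
    intro m
    induction m with
    | zero => simp
    | succ k ih =>
      intro t
      rw [pow_succ', pow_succ', Module.End.mul_apply, Module.End.mul_apply, ih, hψ1]
  let j : V →ₗ[ℝ] (Fin n → ℂ) :=
    (e.restrictScalars ℝ).toLinearMap ∘ₗ ((TensorProduct.mk ℝ ℂ V) 1)
  have hj : ∀ v : V, j v = e ((1:ℂ) ⊗ₜ[ℝ] v) := fun v => rfl
  have hFt : ∀ (m : ℕ) (v : V), (F ^ m) ((1:ℂ) ⊗ₜ[ℝ] v) = (1:ℂ) ⊗ₜ[ℝ] ((φ ^ m) v) := by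
    intro m
    induction m with
    | zero => simp
    | succ k ih =>
      intro v
      rw [pow_succ', pow_succ', Module.End.mul_apply, Module.End.mul_apply, ih]
      exact LinearMap.baseChange_tmul φ 1 ((φ ^ k) v)
  have hjφ : ∀ (m : ℕ) (v : V), (a ^ m) (j v) = j ((φ ^ m) v) := by
    intro m v
    rw [hj, ha, hψm, hFt, hj]
  let π : (Fin n → ℂ) →ₗ[ℝ] V := πt ∘ₗ (e.restrictScalars ℝ).symm.toLinearMap
  have hπj : ∀ v : V, π (j v) = v := by
    intro v
    show πt ((e.restrictScalars ℝ).symm (j v)) = v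
    rw [hj]
    have h2 : (e.restrictScalars ℝ).symm (e ((1:ℂ) ⊗ₜ[ℝ] v)) = (1:ℂ) ⊗ₜ[ℝ] v :=
      (e.restrictScalars ℝ).symm_apply_apply _
    rw [h2, hπt1]
  have hTsurj : Function.Surjective fun p : V × V => j p.1 + Complex.I • j p.2 := by
    intro w
    obtain ⟨t, rfl⟩ := e.surjective w
    suffices h : ∃ x y : V, (1:ℂ) ⊗ₜ[ℝ] x + Complex.I • ((1:ℂ) ⊗ₜ[ℝ] y) = t by
      obtain ⟨x, y, hxy⟩ := h
      refine ⟨(x, y), ?_⟩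
      show j x + Complex.I • j y = e t
      rw [hj, hj, ← map_smul, ← map_add, hxy]
    induction t with
    | zero => exact ⟨0, 0, by simp⟩
    | tmul c v =>
      refine ⟨c.re • v, c.im • v, ?_⟩
      have h1 : (1:ℂ) ⊗ₜ[ℝ] (c.re • v) = (c.re : ℂ) • ((1:ℂ) ⊗ₜ[ℝ] v) := by
        rw [TensorProduct.tmul_smul, ← algebraMap_smul ℂ c.re]
        rfl
      have h2 : (1:ℂ) ⊗ₜ[ℝ] (c.im • v) = (c.im : ℂ) • ((1:ℂ) ⊗ₜ[ℝ] v) := by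
        rw [TensorProduct.tmul_smul, ← algebraMap_smul ℂ c.im]
        rfl
      rw [h1, h2, smul_smul, ← add_smul, mul_comm, Complex.re_add_im,
        TensorProduct.smul_tmul', smul_eq_mul, mul_one]
    | add s t hs ht =>
      obtain ⟨x1, y1, h1⟩ := hs
      obtain ⟨x2, y2, h2⟩ := ht
      refine ⟨x1 + x2, y1 + y2, ?_⟩
      rw [TensorProduct.tmul_add, TensorProduct.tmul_add, smul_add, ← h1, ← h2]
      abel
  refine ⟨n, j, π, a, hπj, hjφ, hTsurj, fun μ => ?_⟩
  have espec : spectrum ℂ a = spectrum ℂ ψ :=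
    AlgEquiv.spectrum_eq (Module.End.toContinuousLinearMap (Fin n → ℂ)) ψ
  rw [espec, ← Module.End.hasEigenvalue_iff_mem_spectrum]
  constructor
  · intro hμ
    obtain ⟨v, hv⟩ := hμ.exists_hasEigenvector
    refine Module.End.hasEigenvalue_of_hasEigenvector (x := e v) ⟨?_, ?_⟩
    · rw [Module.End.mem_eigenspace_iff, hψ1, hv.apply_eq_smul, map_smul]
    · simpa using hv.2
  · intro hμ
    obtain ⟨w, hw⟩ := hμ.exists_hasEigenvector
    refine Module.End.hasEigenvalue_of_hasEigenvector (x := e.symm w) ⟨?_, ?_⟩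
    · rw [Module.End.mem_eigenspace_iff]
      have h1 : ψ (e (e.symm w)) = e (F (e.symm w)) := hψ1 _
      rw [e.apply_symm_apply, hw.apply_eq_smul] at h1
      have h3 := congrArg e.symm h1
      rw [e.symm_apply_apply, map_smul] at h3
      exact h3.symm
    · simpa using hw.2

/-- The spectral radius of a linear endomorphism of a real vector space: the supremum of
the absolute values of the complex eigenvalues of its complexification. -/
noncomputable def specRadR {V : Type*} [AddCommGroup V] [Module ℝ V]
    (φ : V →ₗ[ℝ] V) : ℝ :=
  sSup {r : ℝ | ∃ μ : ℂ,
    Module.End.HasEigenvalue (LinearMap.baseChange ℂ φ : Module.End ℂ (ℂ ⊗[ℝ] V)) μ ∧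
      r = ‖μ‖}

set_option maxHeartbeats 2000000 in
/-- Let `C` be a closed strictly convex cone with `C - C = V` in a
finite-dimensional real vector space `V`, and `φ` linear with `φ(C) ⊆ C`.  For any norm,
any linear form `χ` positive on `C \ {0}`, and any `u` in the interior of `C`,
`ρ(φ) = lim ‖φ^m u‖^{1/m} = lim χ(φ^m u)^{1/m}`. -/
theorem stmt4 {V : Type*} [NormedAddCommGroup V] [NormedSpace ℝ V] [FiniteDimensional ℝ V]
    (C : Set V) (hC : IsClosed C)
    (hadd : ∀ x ∈ C, ∀ y ∈ C, x + y ∈ C)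
    (hsmul : ∀ (r : ℝ), 0 < r → ∀ x ∈ C, r • x ∈ C)
    (hstrict : ∀ x ∈ C, -x ∈ C → x = 0)
    (hgen : ∀ v : V, ∃ x ∈ C, ∃ y ∈ C, v = x - y)
    (φ : Module.End ℝ V) (hφ : Set.MapsTo φ C C)
    (χ : V →ₗ[ℝ] ℝ) (hχ : ∀ x ∈ C, x ≠ 0 → 0 < χ x)
    (u : V) (hu : u ∈ interior C) :
    Tendsto (fun m : ℕ => ‖(φ ^ m) u‖ ^ ((m : ℝ)⁻¹)) atTop (nhds (specRadR φ)) ∧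
    Tendsto (fun m : ℕ => (χ ((φ ^ m) u)) ^ ((m : ℝ)⁻¹)) atTop (nhds (specRadR φ)) := by
  classical
  have huC : u ∈ C := interior_subset hu
  by_cases hV : Subsingleton V
  · -- trivial space
    have hu0 : u = 0 := Subsingleton.elim u 0
    have hrad : specRadR φ = 0 := by
      have hall : ∀ t : ℂ ⊗[ℝ] V, t = 0 := fun t => by
        induction t with
        | zero => rfl
        | tmul c v => rw [Subsingleton.elim v (0:V), TensorProduct.tmul_zero]
        | add x y hx hy => rw [hx, hy, add_zero]
      have hset : {r : ℝ | ∃ μ : ℂ, Module.End.HasEigenvalue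
          (LinearMap.baseChange ℂ φ : Module.End ℂ (ℂ ⊗[ℝ] V)) μ ∧ r = ‖μ‖} = ∅ := by
        ext s
        simp only [Set.mem_setOf_eq, Set.mem_empty_iff_false, iff_false, not_exists]
        intro μ h
        obtain ⟨v, hv⟩ := h.1.exists_hasEigenvector
        exact hv.2 (hall v)
      unfold specRadR
      rw [hset, Real.sSup_empty]
    rw [hrad]
    have hz : ∀ᶠ m : ℕ in atTop, ((m:ℝ)⁻¹ ≠ 0) := by
      filter_upwards [eventually_ge_atTop 1] with m hm
      exact inv_ne_zero (Nat.cast_ne_zero.mpr (by omega))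
    constructor
    · refine Tendsto.congr' ?_ tendsto_const_nhds
      filter_upwards [hz] with m hm
      rw [hu0, map_zero, norm_zero, Real.zero_rpow hm]
    · refine Tendsto.congr' ?_ tendsto_const_nhds
      filter_upwards [hz] with m hm
      rw [hu0, map_zero, map_zero, Real.zero_rpow hm]
  -- nontrivial space
  have hV' : Nontrivial V := not_subsingleton_iff_nontrivial.mp hV
  obtain ⟨v0, hv0⟩ := exists_ne (0 : V)
  -- the linear functional is bounded below on the cone
  obtain ⟨δ, hδ0, hδle⟩ : ∃ δ : ℝ, 0 < δ ∧ ∀ c ∈ C, δ * ‖c‖ ≤ χ c := by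
    have hχcont : Continuous χ := LinearMap.continuous_of_finiteDimensional χ
    by_cases hK : (C ∩ Metric.sphere 0 1).Nonempty
    · have hKc : IsCompact (C ∩ Metric.sphere 0 1) :=
        (isCompact_sphere 0 1).inter_left hC
      obtain ⟨c0, hc0, hmin⟩ := hKc.exists_isMinOn hK hχcont.continuousOn
      have hc00 : c0 ≠ 0 := fun h => by
        simpa [h] using hc0.2
      refine ⟨χ c0, hχ c0 hc0.1 hc00, fun c hc => ?_⟩
      rcases eq_or_ne c 0 with rfl | hcne
      · simp
      · have hnorm : (0:ℝ) < ‖c‖ := norm_pos_iff.mpr hcne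
        have hmem : (‖c‖⁻¹) • c ∈ C ∩ Metric.sphere 0 1 := by
          refine ⟨hsmul _ (by positivity) c hc, ?_⟩
          simp [norm_smul, abs_of_pos (inv_pos.mpr hnorm), inv_mul_cancel₀ hnorm.ne']
        have h0 : χ c0 ≤ χ (‖c‖⁻¹ • c) := hmin hmem
        rw [map_smul, smul_eq_mul] at h0
        have h2 : χ c0 * ‖c‖ ≤ ‖c‖⁻¹ * χ c * ‖c‖ := by nlinarith
        calc χ c0 * ‖c‖ ≤ ‖c‖⁻¹ * χ c * ‖c‖ := h2
          _ = χ c := by field_simp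
    · refine ⟨1, one_pos, fun c hc => ?_⟩
      rcases eq_or_ne c 0 with rfl | hcne
      · simp
      · exfalso
        have hnorm : (0:ℝ) < ‖c‖ := norm_pos_iff.mpr hcne
        exact hK ⟨(‖c‖⁻¹) • c, hsmul _ (by positivity) c hc, by
          simp [norm_smul, abs_of_pos (inv_pos.mpr hnorm), inv_mul_cancel₀ hnorm.ne']⟩
  have hχnn : ∀ c ∈ C, 0 ≤ χ c := fun c hc => le_trans (by positivity) (hδle c hc)
  have hnormle : ∀ c ∈ C, ‖c‖ ≤ δ⁻¹ * χ c := fun c hc => by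
    rw [le_inv_mul_iff₀ hδ0]; exact hδle c hc
  -- a ball around u inside the cone
  obtain ⟨α, hα0, hαC⟩ : ∃ α : ℝ, 0 < α ∧ ∀ x : V, ‖x‖ ≤ α → u + x ∈ C := by
    obtain ⟨ε, hε0, hball⟩ := Metric.mem_nhds_iff.mp (mem_interior_iff_mem_nhds.mp hu)
    refine ⟨ε / 2, by positivity, fun x hx => hball ?_⟩
    rw [Metric.mem_ball, dist_eq_norm]
    simpa using lt_of_le_of_lt hx (by linarith)
  have hu0 : u ≠ 0 := by
    intro h
    have hnv : (0:ℝ) < ‖v0‖ := norm_pos_iff.mpr hv0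
    set x := (α * ‖v0‖⁻¹) • v0 with hx
    have hxn : ‖x‖ = α := by
      rw [hx, norm_smul, Real.norm_eq_abs, abs_of_pos (by positivity)]
      field_simp
    have h1 : x ∈ C := by simpa [h] using hαC x hxn.le
    have h2 : -x ∈ C := by simpa [h] using hαC (-x) (by simpa using hxn.le)
    have := hstrict x h1 h2
    rw [this] at hxn
    simp at hxn
    exact hα0.ne' hxn.symm
  -- powers of φ preserve the cone
  have hφm : ∀ (m : ℕ), ∀ c ∈ C, (φ ^ m) c ∈ C := by
    intro m c hc
    rw [Module.End.pow_apply]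
    exact hφ.iterate m hc
  -- bound on χ
  set χc := LinearMap.toContinuousLinearMap χ with hχcdef
  set M := ‖χc‖ with hMdef
  have hM : ∀ x : V, |χ x| ≤ M * ‖x‖ := fun x => by
    exact χc.le_opNorm x
  have hχu : 0 < χ u := hχ u huC hu0
  have hM0 : 0 < M := by
    by_contra hcon
    push_neg at hcon
    have h1 := hM u
    rw [abs_of_pos hχu] at h1
    nlinarith [norm_nonneg u]
  -- key cone bound
  have hkey : ∀ (m : ℕ) (x : V), ‖x‖ ≤ α → ‖(φ ^ m) x‖ ≤ 3 * δ⁻¹ * χ ((φ ^ m) u) := by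
    intro m x hx
    have hp : u + x ∈ C := hαC x hx
    have hq : u + (-x) ∈ C := hαC (-x) (by simpa using hx)
    have hpq : (u + x) + (u + -x) = (2:ℝ) • u := by
      rw [two_smul]; abel
    have hχp : χ ((φ ^ m) (u + x)) ≤ 2 * χ ((φ ^ m) u) := by
      have h1 : χ ((φ ^ m) (u + x)) + χ ((φ ^ m) (u + -x)) = 2 * χ ((φ ^ m) u) := by
        rw [← map_add, ← map_add, hpq, map_smul, map_smul, smul_eq_mul]
      have h2 : 0 ≤ χ ((φ ^ m) (u + -x)) := hχnn _ (hφm m _ hq)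
      linarith
    have hd : (φ ^ m) x = (φ ^ m) (u + x) - (φ ^ m) u := by
      rw [← map_sub]; congr 1; abel
    rw [hd]
    have h3 : ‖(φ ^ m) (u + x) - (φ ^ m) u‖ ≤ ‖(φ ^ m) (u + x)‖ + ‖(φ ^ m) u‖ :=
      norm_sub_le _ _
    have h4 : ‖(φ ^ m) (u + x)‖ ≤ δ⁻¹ * χ ((φ ^ m) (u + x)) := hnormle _ (hφm m _ hp)
    have h5 : ‖(φ ^ m) u‖ ≤ δ⁻¹ * χ ((φ ^ m) u) := hnormle _ (hφm m u huC)
    have h6 : δ⁻¹ * χ ((φ ^ m) (u + x)) ≤ δ⁻¹ * (2 * χ ((φ ^ m) u)) :=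
      mul_le_mul_of_nonneg_left hχp (by positivity)
    nlinarith
  have hχm : ∀ m : ℕ, 0 ≤ χ ((φ ^ m) u) := fun m => hχnn _ (hφm m u huC)
  -- general bound
  have hbound : ∀ (m : ℕ) (x : V),
      ‖(φ ^ m) x‖ ≤ (3 * δ⁻¹ * α⁻¹) * χ ((φ ^ m) u) * ‖x‖ := by
    intro m x
    rcases eq_or_ne x 0 with rfl | hxne
    · simp
    · have hnx : (0:ℝ) < ‖x‖ := norm_pos_iff.mpr hxne
      have h1 := hkey m ((α * ‖x‖⁻¹) • x) (by
        rw [norm_smul, Real.norm_eq_abs, abs_of_pos (by positivity)]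
        rw [mul_assoc, inv_mul_cancel₀ hnx.ne', mul_one])
      rw [map_smul, norm_smul, Real.norm_eq_abs, abs_of_pos (by positivity)] at h1
      have h2 : ‖(φ ^ m) x‖ = (α * ‖x‖⁻¹)⁻¹ * (α * ‖x‖⁻¹ * ‖(φ ^ m) x‖) := by
        field_simp
      rw [h2]
      calc (α * ‖x‖⁻¹)⁻¹ * (α * ‖x‖⁻¹ * ‖(φ ^ m) x‖)
          ≤ (α * ‖x‖⁻¹)⁻¹ * (3 * δ⁻¹ * χ ((φ ^ m) u)) := by
            exact mul_le_mul_of_nonneg_left h1 (by positivity)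
        _ = (3 * δ⁻¹ * α⁻¹) * χ ((φ ^ m) u) * ‖x‖ := by
            field_simp
  -- complexified picture
  obtain ⟨n, j, π, a, hπj, hjφ, hTsurj, hiff⟩ := aux_complexify φ
  haveI : Nontrivial (Fin n → ℂ) :=
    ⟨⟨j u, 0, fun h => hu0 (by rw [← hπj u, h, map_zero])⟩⟩
  set jc : V →L[ℝ] (Fin n → ℂ) := LinearMap.toContinuousLinearMap j with hjcdef
  set πc : (Fin n → ℂ) →L[ℝ] V := LinearMap.toContinuousLinearMap π with hπcdef
  have hjcn : ∀ v : V, ‖j v‖ ≤ ‖jc‖ * ‖v‖ := fun v => jc.le_opNorm v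
  have hπcn : ∀ w : Fin n → ℂ, ‖π w‖ ≤ ‖πc‖ * ‖w‖ := fun w => πc.le_opNorm w
  have hjc0 : (0:ℝ) < ‖jc‖ := by
    rw [norm_pos_iff]
    intro h
    apply hu0
    have hju : j u = 0 := by
      have : jc u = 0 := by rw [h]; rfl
      exact this
    rw [← hπj u, hju, map_zero]
  -- the surjection as a continuous linear map
  set Tc : (V × V) →L[ℝ] (Fin n → ℂ) :=
    (jc.comp (ContinuousLinearMap.fst ℝ V V)) +
      Complex.I • (jc.comp (ContinuousLinearMap.snd ℝ V V)) with hTcdef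
  have hTc : ∀ p : V × V, Tc p = j p.1 + Complex.I • j p.2 := fun p => rfl
  have hTcs : Function.Surjective Tc := by
    intro w
    obtain ⟨p, hp⟩ := hTsurj w
    exact ⟨p, by rw [hTc]; exact hp⟩
  obtain ⟨KT, hKT0, hKT⟩ := ContinuousLinearMap.exists_preimage_norm_le Tc hTcs
  set C1 : ℝ := 3 * δ⁻¹ * α⁻¹ with hC1def
  have hC10 : 0 < C1 := mul_pos (mul_pos three_pos (inv_pos.mpr hδ0)) (inv_pos.mpr hα0)
  set C2 : ℝ := 2 * ‖jc‖ * C1 * KT with hC2def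
  have hC20 : 0 < C2 := mul_pos (mul_pos (mul_pos two_pos hjc0) hC10) hKT0
  -- operator norm of a^m is controlled by χ (φ^m u)
  have hgm : ∀ m : ℕ, ‖a ^ m‖ ≤ C2 * χ ((φ ^ m) u) := by
    intro m
    refine ContinuousLinearMap.opNorm_le_bound _ (mul_nonneg hC20.le (hχm m)) fun w => ?_
    obtain ⟨p, hp, hpn⟩ := hKT w
    have hp' : j p.1 + Complex.I • j p.2 = w := by rw [← hTc, hp]
    have h1 : (a ^ m) w = j ((φ ^ m) p.1) + Complex.I • j ((φ ^ m) p.2) := by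
      rw [← hp', map_add, (a ^ m).map_smul, hjφ, hjφ]
    have hp1 : ‖p.1‖ ≤ KT * ‖w‖ := (norm_fst_le p).trans hpn
    have hp2 : ‖p.2‖ ≤ KT * ‖w‖ := (norm_snd_le p).trans hpn
    calc ‖(a ^ m) w‖ ≤ ‖j ((φ ^ m) p.1)‖ + ‖j ((φ ^ m) p.2)‖ := by
          rw [h1]
          refine (norm_add_le _ _).trans ?_
          rw [norm_smul, Complex.norm_I, one_mul]
      _ ≤ ‖jc‖ * ‖(φ ^ m) p.1‖ + ‖jc‖ * ‖(φ ^ m) p.2‖ := add_le_add (hjcn _) (hjcn _)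
      _ ≤ ‖jc‖ * (C1 * χ ((φ ^ m) u) * ‖p.1‖) + ‖jc‖ * (C1 * χ ((φ ^ m) u) * ‖p.2‖) :=
          add_le_add (mul_le_mul_of_nonneg_left (hbound m p.1) (norm_nonneg _))
            (mul_le_mul_of_nonneg_left (hbound m p.2) (norm_nonneg _))
      _ ≤ ‖jc‖ * (C1 * χ ((φ ^ m) u) * (KT * ‖w‖)) + ‖jc‖ * (C1 * χ ((φ ^ m) u) * (KT * ‖w‖)) := by
          gcongr <;> [exact mul_nonneg hC10.le (hχm m); exact mul_nonneg hC10.le (hχm m)]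
      _ = C2 * χ ((φ ^ m) u) * ‖w‖ := by rw [hC2def]; ring
  -- ‖φ^m u‖ is controlled by the operator norm
  set B0 : ℝ := ‖πc‖ * ‖jc‖ * ‖u‖ with hB0def
  have hB00 : 0 ≤ B0 := mul_nonneg (mul_nonneg (norm_nonneg _) (norm_nonneg _)) (norm_nonneg _)
  have hfg : ∀ m : ℕ, ‖(φ ^ m) u‖ ≤ B0 * ‖a ^ m‖ := by
    intro m
    have h1 : (φ ^ m) u = π ((a ^ m) (j u)) := by rw [hjφ, hπj]
    calc ‖(φ ^ m) u‖ = ‖π ((a ^ m) (j u))‖ := by rw [h1]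
      _ ≤ ‖πc‖ * ‖(a ^ m) (j u)‖ := hπcn _
      _ ≤ ‖πc‖ * (‖a ^ m‖ * ‖j u‖) :=
          mul_le_mul_of_nonneg_left ((a ^ m).le_opNorm _) (norm_nonneg _)
      _ ≤ ‖πc‖ * (‖a ^ m‖ * (‖jc‖ * ‖u‖)) := by
          gcongr
          exact hjcn u
      _ = B0 * ‖a ^ m‖ := by rw [hB0def]; ring
  -- identify the spectral radius
  have hval : specRadR φ = (spectralRadius ℂ a).toReal := by
    have hset : {r : ℝ | ∃ μ : ℂ, Module.End.HasEigenvalue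
        (LinearMap.baseChange ℂ φ : Module.End ℂ (ℂ ⊗[ℝ] V)) μ ∧ r = ‖μ‖} =
        (fun μ => ‖μ‖) '' spectrum ℂ a := by
      ext s
      simp only [Set.mem_setOf_eq, Set.mem_image]
      constructor
      · rintro ⟨μ, hμ, rfl⟩
        exact ⟨μ, (hiff μ).mp hμ, rfl⟩
      · rintro ⟨μ, hμ, rfl⟩
        exact ⟨μ, (hiff μ).mpr hμ, rfl⟩
    unfold specRadR
    rw [hset, aux_sSup_abs_spectrum a]
  rw [hval]
  have hr : Tendsto (fun m : ℕ => ‖a ^ m‖ ^ ((m:ℝ)⁻¹)) atTop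
      (nhds (spectralRadius ℂ a).toReal) := aux_gelfand a
  constructor
  · -- the norm sequence
    refine aux_root_squeeze (fun m => norm_nonneg _) (A := C2 * M) (B := B0 + 1)
      (mul_pos hC20 hM0) (by linarith) (fun m => ?_) (fun m => ?_) hr
    · calc ‖a ^ m‖ ≤ C2 * χ ((φ ^ m) u) := hgm m
        _ ≤ C2 * (M * ‖(φ ^ m) u‖) :=
            mul_le_mul_of_nonneg_left ((le_abs_self _).trans (hM _)) hC20.le
        _ = C2 * M * ‖(φ ^ m) u‖ := by ring
    · have := hfg m
      nlinarith [norm_nonneg (a ^ m)]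
  · -- the functional sequence
    refine aux_root_squeeze (fun m => norm_nonneg _) (A := C2) (B := M * B0 + 1)
      hC20 (by nlinarith) (fun m => ?_) (fun m => ?_) hr
    · exact hgm m
    · have h1 : χ ((φ ^ m) u) ≤ M * ‖(φ ^ m) u‖ := (le_abs_self _).trans (hM _)
      have h2 := hfg m
      nlinarith [norm_nonneg (a ^ m)]
end

section
/- Let G be a group and ρ : G → GL(V) a representation on a finite-dimensional complex vector space V. If there is a uniform bound M such that every element of the image ρ(G) has finite order at most M, then the image ρ(G) is a finite group (Burnside's theorem on torsion linear groups of bounded exponent). -/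
open Polynomial Module

section Aux

variable {V : Type*} [AddCommGroup V] [Module ℂ V] [FiniteDimensional ℂ V]

/-- Every root of the characteristic polynomial over `ℂ` is an eigenvalue. -/
lemma aux_root_charpoly_hasEigenvalue (f : Module.End ℂ V) {r : ℂ}
    (hr : f.charpoly.IsRoot r) : f.HasEigenvalue r := by
  classical
  set b := Module.Free.chooseBasis ℂ V with hb
  set A := LinearMap.toMatrix b b f with hA
  have hch : f.charpoly = A.charpoly := (LinearMap.charpoly_toMatrix f b).symm
  have heval : f.charpoly.eval r = ((evalRingHom r).mapMatrix A.charmatrix).det := by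
    rw [hch, Matrix.charpoly, ← RingHom.map_det]
    rfl
  have hmap : (evalRingHom r).mapMatrix A.charmatrix = Matrix.scalar _ r - A := by
    ext i j
    by_cases h : i = j
    · subst h
      simp [Matrix.charmatrix_apply_eq, Matrix.scalar_apply]
    · simp [Matrix.charmatrix_apply_ne _ _ _ h, Matrix.scalar_apply, Matrix.diagonal_apply_ne _ h]
  have hdet : LinearMap.det (r • (1 : Module.End ℂ V) - f) = 0 := by
    rw [← LinearMap.det_toMatrix b]
    have : LinearMap.toMatrix b b (r • (1 : Module.End ℂ V) - f)
        = Matrix.scalar _ r - A := by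
      ext i j
      simp only [map_sub, map_smul, LinearMap.toMatrix_one, Matrix.sub_apply,
        Matrix.smul_apply, Matrix.one_apply, Matrix.scalar_apply, Matrix.diagonal_apply]
      split <;> simp [hA]
    rw [this, ← hmap, ← heval]
    exact hr
  have hker : ⊥ < LinearMap.ker (r • (1 : Module.End ℂ V) - f) :=
    LinearMap.bot_lt_ker_of_det_eq_zero hdet
  obtain ⟨v, hv, hv0⟩ := Submodule.exists_mem_ne_zero_of_ne_bot hker.ne'
  have hfv : f v = r • v := by
    have := LinearMap.mem_ker.mp hv
    simp only [LinearMap.sub_apply, LinearMap.smul_apply, Module.End.one_apply,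
      sub_eq_zero] at this
    exact this.symm
  exact Module.End.hasEigenvalue_of_hasEigenvector ⟨Module.End.mem_eigenspace_iff.mpr hfv, hv0⟩

/-- Roots of the characteristic polynomial of `f` with `f ^ N = 1` are `N`-th roots of unity. -/
lemma aux_root_pow_eq_one {f : Module.End ℂ V} {N : ℕ} (hf : f ^ N = 1) {r : ℂ}
    (hr : f.charpoly.IsRoot r) : r ^ N = 1 := by
  have h := (aux_root_charpoly_hasEigenvalue f hr).pow N
  rw [hf] at h
  obtain ⟨v, hv⟩ := h.exists_hasEigenvector
  have h1 : v = r ^ N • v := by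
    have := Module.End.mem_eigenspace_iff.mp hv.1
    simpa using this
  have : (r ^ N - 1) • v = 0 := by
    rw [sub_smul, one_smul, ← h1, sub_self]
  rcases smul_eq_zero.mp this with h | h
  · exact sub_eq_zero.mp h
  · exact absurd h hv.2

end Aux

section Aux2

variable {V : Type*} [AddCommGroup V] [Module ℂ V] [FiniteDimensional ℂ V]

lemma aux_trace_eq_sum_roots (f : Module.End ℂ V) :
    LinearMap.trace ℂ V f = f.charpoly.roots.sum := by
  classical
  set b := Module.Free.chooseBasis ℂ V with hb
  rw [LinearMap.trace_eq_matrix_trace ℂ b f, Matrix.trace_eq_sum_roots_charpoly,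
    LinearMap.charpoly_toMatrix f b]

lemma aux_card_roots (f : Module.End ℂ V) :
    f.charpoly.roots.card = finrank ℂ V := by
  rw [(Polynomial.splits_iff_card_roots).mp (IsAlgClosed.splits f.charpoly),
    LinearMap.charpoly_natDegree]

/-- The trace of an endomorphism with `f ^ N = 1` is a sum of `finrank` many `N`-th
roots of unity. -/
lemma aux_trace_mem {f : Module.End ℂ V} {N : ℕ} (hf : f ^ N = 1) :
    ∃ ζ : Fin (finrank ℂ V) → ℂ, (∀ i, ζ i ^ N = 1) ∧
      LinearMap.trace ℂ V f = ∑ i, ζ i := by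
  classical
  set l := f.charpoly.roots.toList with hl
  have hlen : l.length = finrank ℂ V := by
    rw [hl, Multiset.length_toList, aux_card_roots]
  have hmem : ∀ i : Fin l.length, l[i.1] ^ N = 1 := by
    intro i
    have : l[i.1] ∈ f.charpoly.roots := by
      rw [← Multiset.mem_toList]; exact List.getElem_mem _
    exact aux_root_pow_eq_one hf (Polynomial.isRoot_of_mem_roots this)
  refine ⟨fun i => l[(Fin.cast hlen.symm i).1], fun i => hmem _, ?_⟩
  have h1 : LinearMap.trace ℂ V f = ∑ i : Fin l.length, l[i.1] := by
    rw [aux_trace_eq_sum_roots, ← Multiset.sum_toList]; exact (Fin.sum_univ_getElem l).symm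
  rw [h1]
  exact Fintype.sum_equiv (finCongr hlen) _ _ (fun i => rfl)

end Aux2

section Aux3

variable {V : Type*} [AddCommGroup V] [Module ℂ V] [FiniteDimensional ℂ V]

lemma aux_eq_one_of_trace [Nontrivial V] {f : Module.End ℂ V} {N : ℕ} (hN : 0 < N)
    (hf : f ^ N = 1) (htr : LinearMap.trace ℂ V f = (finrank ℂ V : ℂ)) : f = 1 := by
  classical
  have habs : ∀ r ∈ f.charpoly.roots, ‖r‖ = 1 := by
    intro r hr
    have h1 : r ^ N = 1 := aux_root_pow_eq_one hf (Polynomial.isRoot_of_mem_roots hr)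
    have h2 : ‖r‖ ^ N = 1 := by rw [← norm_pow, h1, norm_one]
    rcases lt_trichotomy ‖r‖ 1 with h | h | h
    · have := pow_lt_one₀ (norm_nonneg r) h hN.ne'
      rw [h2] at this; exact absurd this (lt_irrefl 1)
    · exact h
    · have := one_lt_pow₀ h hN.ne'
      rw [h2] at this; exact absurd this (lt_irrefl 1)
  set l := f.charpoly.roots.toList with hl
  have hmeml : ∀ x ∈ l, x ∈ f.charpoly.roots := fun x hx => Multiset.mem_toList.mp hx
  have hlen : l.length = finrank ℂ V := by rw [hl, Multiset.length_toList, aux_card_roots]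
  have hsum : ∑ i : Fin l.length, (l[i.1]).re = (finrank ℂ V : ℝ) := by
    have h0 : (LinearMap.trace ℂ V f).re = (finrank ℂ V : ℝ) := by rw [htr]; simp
    rw [aux_trace_eq_sum_roots, ← Multiset.sum_toList, ← hl, ← Fin.sum_univ_getElem,
      Complex.re_sum] at h0
    exact h0
  have hle : ∀ i : Fin l.length, (l[i.1]).re ≤ 1 := by
    intro i
    calc (l[i.1]).re ≤ ‖l[i.1]‖ := Complex.re_le_norm _
    _ = 1 := habs _ (hmeml _ (List.getElem_mem _))
  have hre1 : ∀ i : Fin l.length, (l[i.1]).re = 1 := by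
    have heq : ∑ i : Fin l.length, (l[i.1]).re = ∑ _i : Fin l.length, (1 : ℝ) := by
      rw [hsum]; simp [hlen]
    intro i
    exact (Finset.sum_eq_sum_iff_of_le (fun i _ => hle i)).mp heq i (Finset.mem_univ i)
  have hall : ∀ r ∈ f.charpoly.roots, r = 1 := by
    intro r hr
    rw [← Multiset.mem_toList, ← hl] at hr
    obtain ⟨i, hi, rfl⟩ := List.getElem_of_mem hr
    have h1 : ‖l[i]‖ = 1 := habs _ (hmeml _ (List.getElem_mem _))
    have h2 : (l[i]).re = 1 := hre1 ⟨i, hi⟩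
    have h3 : (l[i]).im = 0 := by
      have := Complex.sq_norm (l[i])
      rw [h1, Complex.normSq_apply, h2] at this
      nlinarith [sq_nonneg (l[i]).im]
    exact Complex.ext (by simp [h2]) (by simp [h3])
  haveI : Nontrivial (Module.End ℂ V) := by
    obtain ⟨v, hv⟩ := exists_ne (0 : V)
    exact nontrivial_of_ne 1 0 (fun h => hv (by simpa using congrFun (congrArg DFunLike.coe h) v))
  have hint : IsIntegral ℂ f :=
    ⟨X ^ N - C 1, Polynomial.monic_X_pow_sub_C 1 hN.ne', by simp [hf]⟩
  have hdvd : minpoly ℂ f ∣ X ^ N - C 1 := minpoly.dvd _ _ (by simp [hf])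
  have hsep : (X ^ N - C (1:ℂ)).Separable :=
    Polynomial.separable_X_pow_sub_C 1 (by exact_mod_cast hN.ne') one_ne_zero
  have hsqf : Squarefree (minpoly ℂ f) := (hsep.of_dvd hdvd).squarefree
  have hroots1 : ∀ r ∈ (minpoly ℂ f).roots, r = 1 := fun r hr => hall r
    (Multiset.mem_of_le (Polynomial.roots.le_of_dvd (f.charpoly_monic.ne_zero)
      (LinearMap.minpoly_dvd_charpoly f)) hr)
  have hsp : (minpoly ℂ f).Splits := IsAlgClosed.splits _
  have hm : minpoly ℂ f = (X - C 1) ^ (minpoly ℂ f).roots.card := by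
    have hmapeq : (minpoly ℂ f).roots.map (fun a => X - C a)
        = (minpoly ℂ f).roots.map (fun _ => X - C (1:ℂ)) :=
      Multiset.map_congr rfl (fun r hr => by rw [hroots1 r hr])
    conv_lhs => rw [Polynomial.Splits.eq_prod_roots_of_monic hsp (minpoly.monic hint)]
    rw [hmapeq, Multiset.map_const', Multiset.prod_replicate]
  have hcard : (minpoly ℂ f).roots.card = (minpoly ℂ f).natDegree :=
    (Polynomial.splits_iff_card_roots).mp hsp
  have hpos : 0 < (minpoly ℂ f).natDegree := minpoly.natDegree_pos hint
  have hone : (minpoly ℂ f).roots.card = 1 := by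
    by_contra hne
    have h2 : 2 ≤ (minpoly ℂ f).roots.card := by omega
    have : (X - C 1) * (X - C 1) ∣ minpoly ℂ f := by
      rw [hm, ← pow_two]; exact pow_dvd_pow _ h2
    exact (Polynomial.not_isUnit_X_sub_C 1) (hsqf _ this)
  have hmin : minpoly ℂ f = X - C 1 := by rw [hm, hone, pow_one]
  have haev := minpoly.aeval ℂ f
  rw [hmin] at haev
  simp only [map_sub, Polynomial.aeval_X, Polynomial.aeval_C] at haev
  have : f - 1 = 0 := by simpa [Algebra.algebraMap_eq_smul_one] using haev
  exact sub_eq_zero.mp this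

end Aux3

/-- Burnside.  Let `ρ : G → GL(V)` be a representation of a group `G`
on a finite-dimensional complex vector space.  If every element of the image has finite
order bounded by a uniform constant `M`, then the image of `ρ` is finite. -/
theorem stmt14 {G V : Type*} [Group G] [AddCommGroup V] [Module ℂ V]
    [FiniteDimensional ℂ V]
    (ρ : G →* (V →ₗ[ℂ] V)ˣ) (M : ℕ)
    (hord : ∀ g : G, 0 < orderOf (ρ g) ∧ orderOf (ρ g) ≤ M) :
    (Set.range (fun g : G => ρ g)).Finite := by
  classical
  rcases subsingleton_or_nontrivial V with hV | hV
  · haveI : Subsingleton ((V →ₗ[ℂ] V)ˣ) :=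
      ⟨fun a b => Units.ext (Subsingleton.elim _ _)⟩
    exact Set.toFinite _
  set N := M.factorial with hNdef
  have hN : 0 < N := M.factorial_pos
  set f : G → (V →ₗ[ℂ] V) := fun g => (ρ g : V →ₗ[ℂ] V) with hfdef
  have hpow : ∀ g : G, f g ^ N = 1 := by
    intro g
    have h1 : (ρ g) ^ N = 1 :=
      orderOf_dvd_iff_pow_eq_one.mp (Nat.dvd_factorial (hord g).1 (hord g).2)
    calc f g ^ N = ((ρ g ^ N : (V →ₗ[ℂ] V)ˣ) : V →ₗ[ℂ] V) := by
          rw [Units.val_pow_eq_pow_val]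
    _ = 1 := by rw [h1, Units.val_one]
  have hmul : ∀ g h : G, f g * f h = f (g * h) := by
    intro g h; simp only [hfdef, ← Units.val_mul, ← map_mul]
  set F : Set (V →ₗ[ℂ] V) := Set.range f with hF
  have hFfin : F.Finite := by
    obtain ⟨b, hbF, hspan, hind⟩ := exists_linearIndependent ℂ F
    have hbfin : b.Finite := hind.setFinite
    haveI := hbfin.fintype
    set n := finrank ℂ V with hn
    set t : Finset ℂ := Polynomial.nthRootsFinset N (1 : ℂ) with ht
    set S : Set ℂ := Set.range (fun ζ : Fin n → t => ∑ i, (ζ i : ℂ)) with hS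
    have hSfin : S.Finite := Set.finite_range _
    set T : (V →ₗ[ℂ] V) → (b → ℂ) :=
      fun x z => LinearMap.trace ℂ V ((z : V →ₗ[ℂ] V) * x) with hT
    have hTm : ∀ x ∈ F, ∀ z : b, T x z ∈ S := by
      intro x hx z
      obtain ⟨g, rfl⟩ := hx
      obtain ⟨g', hg'⟩ := hbF z.2
      have hzx : (z : V →ₗ[ℂ] V) * f g = f (g' * g) := by rw [← hg', hmul]
      obtain ⟨ζ, hζ, hsum⟩ := aux_trace_mem (hpow (g' * g))
      refine ⟨fun i => ⟨ζ i, (Polynomial.mem_nthRootsFinset hN 1).mpr (hζ i)⟩, ?_⟩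
      simp only [hT, hzx, hsum]; rfl
    have himfin : (T '' F).Finite := by
      apply Set.Finite.subset (Set.Finite.pi (fun _ : b => hSfin))
      rintro φ ⟨x, hx, rfl⟩
      intro z _
      exact hTm x hx z
    apply Set.Finite.of_finite_image himfin
    intro x hx y hy hxy
    obtain ⟨g, rfl⟩ := hx
    obtain ⟨h, rfl⟩ := hy
    have hLb : Set.EqOn ((LinearMap.trace ℂ V) ∘ₗ (LinearMap.mulRight ℂ (f g)))
        ((LinearMap.trace ℂ V) ∘ₗ (LinearMap.mulRight ℂ (f h))) b := by
      intro z hz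
      have := congrFun hxy ⟨z, hz⟩
      simpa [hT, LinearMap.mulRight_apply] using this
    have hspEq := LinearMap.eqOn_span' hLb
    have hz0 : f g⁻¹ ∈ (Submodule.span ℂ b : Set (V →ₗ[ℂ] V)) := by
      rw [hspan]; exact Submodule.subset_span ⟨g⁻¹, rfl⟩
    have he := hspEq hz0
    simp only [LinearMap.coe_comp, Function.comp_apply, LinearMap.mulRight_apply] at he
    rw [hmul, hmul] at he
    have h1 : f (g⁻¹ * g) = 1 := by
      rw [inv_mul_cancel]; simp [hfdef]
    rw [h1, LinearMap.trace_one] at he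
    have hone : f (g⁻¹ * h) = 1 := aux_eq_one_of_trace hN (hpow _) he.symm
    have hgh : f g * f (g⁻¹ * h) = f h := by
      rw [hmul, ← mul_assoc, mul_inv_cancel, one_mul]
    rw [hone, mul_one] at hgh
    exact hgh
  have himg : Units.val '' (Set.range fun g : G => ρ g) = F := by
    rw [← Set.range_comp]; rfl
  exact Set.Finite.of_finite_image (himg ▸ hFfin) (Units.val_injective.injOn)
end
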